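/- Let B be a b×n real matrix whose rows r_i satisfy ‖r_i‖₂ ≤ 1 and b_{i,i} ≥ 1−λ for some 0 < λ < 0.1 (with i ≤ b ≤ n). Let X be uniform on {-1,1}ⁿ. Then P(∃ i ≤ b such that sign((BX)_i) ≠ sign(X_i)) ≤ n·exp(−1/(5λ)); consequently P(‖BX‖₁ ≠ ∑_{i=1}^b X_i (BX)_i) ≤ n·e^{−1/(5λ)}. -/

import Mathlib

open scoped Classical

/-- The `±1` vector associated to `ε : Fin n → Bool`. -/
def Xpm {n : ℕ} (ε : Fin n → Bool) : Fin n → ℝ :=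
  fun i => if ε i then 1 else -1

lemma sum_exp_eq {n : ℕ} (a : Fin n → ℝ) :
    ∑ ε : Fin n → Bool, Real.exp (∑ j, a j * Xpm ε j)
      = ∏ j, (Real.exp (a j) + Real.exp (-(a j))) := by
  have h1 : ∀ ε : Fin n → Bool, Real.exp (∑ j, a j * Xpm ε j)
      = ∏ j, Real.exp (a j * Xpm ε j) := fun ε => Real.exp_sum _ _
  simp_rw [h1]
  have h2 : ∀ j : Fin n, (Real.exp (a j) + Real.exp (-(a j)))
      = ∑ c : Bool, Real.exp (a j * (if c then 1 else -1)) := by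
    intro j
    simp [Fintype.sum_bool, mul_comm]
  simp_rw [h2]
  rw [Finset.prod_univ_sum, Fintype.piFinset_univ]
  rfl

lemma chernoff {n : ℕ} (a : Fin n → ℝ) (γ s : ℝ) (hγ : 0 < γ) (hs : 0 < s)
    (ha : ∑ j, a j ^ 2 ≤ s) :
    ((Finset.univ.filter (fun ε : Fin n → Bool => γ ≤ ∑ j, a j * Xpm ε j)).card : ℝ)
      ≤ 2 ^ n * Real.exp (-(γ ^ 2) / (2 * s)) := by
  set t : ℝ := γ / s with ht_def
  have ht : 0 < t := div_pos hγ hs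
  set F := Finset.univ.filter (fun ε : Fin n → Bool => γ ≤ ∑ j, a j * Xpm ε j) with hF
  have key : (F.card : ℝ) * Real.exp (t * γ) ≤ 2 ^ n * Real.exp (t ^ 2 * s / 2) := by
    calc (F.card : ℝ) * Real.exp (t * γ) = ∑ _ε ∈ F, Real.exp (t * γ) := by
          rw [Finset.sum_const, nsmul_eq_mul]
      _ ≤ ∑ ε ∈ F, Real.exp (∑ j, (t * a j) * Xpm ε j) := by
          apply Finset.sum_le_sum
          intro ε hε
          apply Real.exp_le_exp.2
          have hS : γ ≤ ∑ j, a j * Xpm ε j := (Finset.mem_filter.1 hε).2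
          have : ∑ j, (t * a j) * Xpm ε j = t * ∑ j, a j * Xpm ε j := by
            rw [Finset.mul_sum]; congr 1; ext j; ring
          rw [this]
          exact mul_le_mul_of_nonneg_left hS ht.le
      _ ≤ ∑ ε : Fin n → Bool, Real.exp (∑ j, (t * a j) * Xpm ε j) := by
          apply Finset.sum_le_sum_of_subset_of_nonneg (Finset.filter_subset _ _)
          intros; positivity
      _ = ∏ j, (Real.exp (t * a j) + Real.exp (-(t * a j))) := sum_exp_eq _
      _ ≤ ∏ j, 2 * Real.exp ((t * a j) ^ 2 / 2) := by
          apply Finset.prod_le_prod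
          · intros; positivity
          · intro j _
            have := Real.cosh_le_exp_half_sq (t * a j)
            rw [Real.cosh_eq] at this
            linarith
      _ = 2 ^ n * Real.exp (∑ j, (t * a j) ^ 2 / 2) := by
          rw [Finset.prod_mul_distrib, Finset.prod_const, Real.exp_sum]
          simp
      _ ≤ 2 ^ n * Real.exp (t ^ 2 * s / 2) := by
          apply mul_le_mul_of_nonneg_left _ (by positivity)
          apply Real.exp_le_exp.2
          have : ∑ j, (t * a j) ^ 2 / 2 = t ^ 2 / 2 * ∑ j, a j ^ 2 := by
            rw [Finset.mul_sum]; congr 1; ext j; ring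
          rw [this]
          nlinarith [sq_nonneg t]
  have hexp : Real.exp (t ^ 2 * s / 2) * (Real.exp (t * γ))⁻¹
      = Real.exp (-(γ ^ 2) / (2 * s)) := by
    rw [← Real.exp_neg, ← Real.exp_add]
    congr 1
    field_simp [ht_def]
    rw [ht_def]
    field_simp
    ring
  calc (F.card : ℝ) = (F.card : ℝ) * Real.exp (t * γ) * (Real.exp (t * γ))⁻¹ := by
        field_simp
    _ ≤ 2 ^ n * Real.exp (t ^ 2 * s / 2) * (Real.exp (t * γ))⁻¹ := by
        apply mul_le_mul_of_nonneg_right key (by positivity)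
    _ = 2 ^ n * Real.exp (-(γ ^ 2) / (2 * s)) := by rw [mul_assoc, hexp]

lemma half_lemma {n : ℕ} (i : Fin n) (P : (Fin n → Bool) → Prop)
    (hP : ∀ ε v, P ε → P (Function.update ε i v)) (c : Bool) :
    2 * (Finset.univ.filter (fun ε => P ε ∧ ε i = c)).card
      ≤ (Finset.univ.filter P).card := by
  classical
  set A := Finset.univ.filter (fun ε : Fin n → Bool => P ε ∧ ε i = c) with hA
  set Bf := Finset.univ.filter (fun ε : Fin n → Bool => P ε ∧ ε i = !c) with hB
  have hcard : A.card ≤ Bf.card := by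
    apply Finset.card_le_card_of_injOn (fun ε => Function.update ε i (!c))
    · intro ε hε
      simp only [hA, hB, Finset.mem_coe, Finset.mem_filter, Finset.mem_univ, true_and] at hε ⊢
      exact ⟨hP ε _ hε.1, Function.update_self ..⟩
    · intro ε hε ε' hε' h
      simp only [hA, Finset.coe_filter, Set.mem_setOf_eq] at hε hε'
      funext j
      by_cases hj : j = i
      · subst hj; rw [hε.2.2, hε'.2.2]
      · have := congrFun h j
        simpa [Function.update, hj] using this
  have hdisj : Disjoint A Bf := by
    rw [Finset.disjoint_left]
    intro ε hε hε'
    simp only [hA, hB, Finset.mem_filter, Finset.mem_univ, true_and] at hε hε'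
    rw [hε.2] at hε'
    exact (Bool.not_ne_self c).symm hε'.2
  have hsub : A ∪ Bf ⊆ Finset.univ.filter P := by
    intro ε hε
    rcases Finset.mem_union.1 hε with h | h <;>
      simp only [hA, hB, Finset.mem_filter, Finset.mem_univ, true_and] at h ⊢ <;> exact h.1
  have h1 := Finset.card_union_of_disjoint hdisj
  have h2 := Finset.card_le_card hsub
  omega

lemma row_bound {b n : ℕ} (hbn : b ≤ n) (B : Matrix (Fin b) (Fin n) ℝ)
    (lam : ℝ) (hlam0 : 0 < lam) (hlam1 : lam < 0.1)
    (hrow : ∀ i, Real.sqrt (∑ j, (B i j) ^ 2) ≤ 1)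
    (hdiag : ∀ i, 1 - lam ≤ B i (Fin.castLE hbn i)) (i : Fin b) :
    ((Finset.univ.filter (fun ε : Fin n → Bool =>
        Real.sign ((B.mulVec (Xpm ε)) i) ≠ Real.sign (Xpm ε (Fin.castLE hbn i)))).card : ℝ)
      ≤ 2 ^ n * Real.exp (-1 / (5 * lam)) := by
  classical
  have hlam1' : lam < (1:ℝ)/10 := by norm_num at hlam1; linarith
  set i' : Fin n := Fin.castLE hbn i with hi'
  set γ : ℝ := 1 - lam with hγdef
  set s : ℝ := 1 - (1 - lam) ^ 2 with hsdef
  have hγ : 0 < γ := by rw [hγdef]; linarith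
  have hs : 0 < s := by rw [hsdef]; nlinarith
  set a : Fin n → ℝ := fun j => if j = i' then 0 else B i j with ha_def
  have hBsum : ∑ j, (B i j) ^ 2 ≤ 1 := by
    have h1 := hrow i
    have h2 : (0:ℝ) ≤ ∑ j, (B i j) ^ 2 := by positivity
    nlinarith [Real.sq_sqrt h2, Real.sqrt_nonneg (∑ j, (B i j) ^ 2)]
  have ha : ∑ j, a j ^ 2 ≤ s := by
    have e1 : ∑ j, a j ^ 2 = ∑ j ∈ Finset.univ.erase i', (B i j) ^ 2 := by
      rw [← Finset.sum_erase (f := fun j => a j ^ 2) Finset.univ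
        (show (fun j => a j ^ 2) i' = 0 by simp [ha_def])]
      refine Finset.sum_congr rfl fun j hj => ?_
      rw [ha_def]
      simp [(Finset.mem_erase.1 hj).1]
    have e2 : ∑ j ∈ Finset.univ.erase i', (B i j) ^ 2
        = (∑ j, (B i j) ^ 2) - (B i i') ^ 2 :=
      Finset.sum_erase_eq_sub (Finset.mem_univ i')
    have hd := hdiag i
    rw [← hi'] at hd
    rw [e1, e2, hsdef]
    nlinarith
  have han : ∑ j, (-(a j)) ^ 2 ≤ s := by simpa [neg_pow] using ha
  have hT_update : ∀ (ε : Fin n → Bool) (v : Bool),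
      ∑ j, a j * Xpm (Function.update ε i' v) j = ∑ j, a j * Xpm ε j := by
    intro ε v
    refine Finset.sum_congr rfl fun j _ => ?_
    by_cases hj : j = i'
    · subst hj; simp [ha_def]
    · simp [Xpm, Function.update, hj]
  have hmv : ∀ ε : Fin n → Bool,
      (B.mulVec (Xpm ε)) i = B i i' * Xpm ε i' + ∑ j, a j * Xpm ε j := by
    intro ε
    have hL : (B.mulVec (Xpm ε)) i = ∑ j, B i j * Xpm ε j := rfl
    rw [hL, ← Finset.add_sum_erase _ _ (Finset.mem_univ i')]
    congr 1
    rw [← Finset.sum_erase (f := fun j => a j * Xpm ε j) Finset.univ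
      (show (fun j => a j * Xpm ε j) i' = 0 by simp [ha_def])]
    refine (Finset.sum_congr rfl fun j hj => ?_).symm
    rw [ha_def]
    simp [(Finset.mem_erase.1 hj).1]
  set P : (Fin n → Bool) → Prop :=
    fun ε => Xpm ε i' * (∑ j, a j * Xpm ε j) ≤ -γ with hP_def
  have hincl : ∀ ε : Fin n → Bool,
      Real.sign ((B.mulVec (Xpm ε)) i) ≠ Real.sign (Xpm ε i') → P ε := by
    intro ε hne
    have hd := hdiag i
    rw [← hi'] at hd
    show Xpm ε i' * (∑ j, a j * Xpm ε j) ≤ -γ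
    have hmvε := hmv ε
    cases hc : ε i' with
    | true =>
      have hx : Xpm ε i' = 1 := by simp [Xpm, hc]
      rw [hx] at hne hmvε ⊢
      rw [Real.sign_one] at hne
      have hle : (B.mulVec (Xpm ε)) i ≤ 0 := by
        by_contra h
        push_neg at h
        exact hne (Real.sign_of_pos h)
      rw [hmvε] at hle
      linarith
    | false =>
      have hx : Xpm ε i' = -1 := by simp [Xpm, hc]
      rw [hx] at hne hmvε ⊢
      have hsn : Real.sign (-1 : ℝ) = -1 := by
        rw [show (-1:ℝ) = -(1:ℝ) by ring, Real.sign_neg, Real.sign_one]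
      rw [hsn] at hne
      have hge : 0 ≤ (B.mulVec (Xpm ε)) i := by
        by_contra h
        push_neg at h
        exact hne (Real.sign_of_neg h)
      rw [hmvε] at hge
      linarith
  -- split P into the two coordinate cases
  set Q1 : (Fin n → Bool) → Prop := fun ε => γ ≤ ∑ j, (-(a j)) * Xpm ε j with hQ1
  set Q2 : (Fin n → Bool) → Prop := fun ε => γ ≤ ∑ j, a j * Xpm ε j with hQ2
  have hPsplit : ∀ ε, P ε → (Q1 ε ∧ ε i' = true) ∨ (Q2 ε ∧ ε i' = false) := by
    intro ε hP
    have hneg : ∑ j, (-(a j)) * Xpm ε j = -∑ j, a j * Xpm ε j := by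
      rw [← Finset.sum_neg_distrib]; exact Finset.sum_congr rfl fun j _ => by ring
    cases hc : ε i' with
    | true =>
      left
      refine ⟨?_, rfl⟩
      have hx : Xpm ε i' = 1 := by simp [Xpm, hc]
      have hP' : Xpm ε i' * (∑ j, a j * Xpm ε j) ≤ -γ := hP
      rw [hx, one_mul] at hP'
      show γ ≤ ∑ j, (-(a j)) * Xpm ε j
      rw [hneg]
      linarith
    | false =>
      right
      refine ⟨?_, rfl⟩
      have hx : Xpm ε i' = -1 := by simp [Xpm, hc]
      have hP' : Xpm ε i' * (∑ j, a j * Xpm ε j) ≤ -γ := hP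
      rw [hx] at hP'
      show γ ≤ ∑ j, a j * Xpm ε j
      linarith
  -- invariance of Q1, Q2 under updating coordinate i'
  have hQ1inv : ∀ ε v, Q1 ε → Q1 (Function.update ε i' v) := by
    intro ε v h
    have h' : γ ≤ ∑ j, (-(a j)) * Xpm ε j := h
    show γ ≤ ∑ j, (-(a j)) * Xpm (Function.update ε i' v) j
    have e : ∑ j, (-(a j)) * Xpm (Function.update ε i' v) j
        = ∑ j, (-(a j)) * Xpm ε j := by
      have h1 : ∀ (δ : Fin n → Bool), ∑ j, (-(a j)) * Xpm δ j = -∑ j, a j * Xpm δ j := by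
        intro δ
        rw [← Finset.sum_neg_distrib]
        exact Finset.sum_congr rfl fun j _ => by ring
      rw [h1, h1, hT_update]
    rw [e]
    exact h'
  have hQ2inv : ∀ ε v, Q2 ε → Q2 (Function.update ε i' v) := by
    intro ε v h
    have h' : γ ≤ ∑ j, a j * Xpm ε j := h
    show γ ≤ ∑ j, a j * Xpm (Function.update ε i' v) j
    rw [hT_update]
    exact h'
  -- counting
  have hMsub : (Finset.univ.filter (fun ε : Fin n → Bool =>
        Real.sign ((B.mulVec (Xpm ε)) i) ≠ Real.sign (Xpm ε (Fin.castLE hbn i))))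
      ⊆ (Finset.univ.filter (fun ε : Fin n → Bool => Q1 ε ∧ ε i' = true))
        ∪ (Finset.univ.filter (fun ε : Fin n → Bool => Q2 ε ∧ ε i' = false)) := by
    intro ε hε
    have hε' : Real.sign ((B.mulVec (Xpm ε)) i) ≠ Real.sign (Xpm ε i') :=
      (Finset.mem_filter.1 hε).2
    rcases hPsplit ε (hincl ε hε') with h | h
    · exact Finset.mem_union_left _ (Finset.mem_filter.2 ⟨Finset.mem_univ _, h⟩)
    · exact Finset.mem_union_right _ (Finset.mem_filter.2 ⟨Finset.mem_univ _, h⟩)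
  have hMcard : (Finset.univ.filter (fun ε : Fin n → Bool =>
        Real.sign ((B.mulVec (Xpm ε)) i) ≠ Real.sign (Xpm ε (Fin.castLE hbn i)))).card
      ≤ (Finset.univ.filter (fun ε : Fin n → Bool => Q1 ε ∧ ε i' = true)).card
        + (Finset.univ.filter (fun ε : Fin n → Bool => Q2 ε ∧ ε i' = false)).card :=
    le_trans (Finset.card_le_card hMsub) (Finset.card_union_le _ _)
  have h1 := half_lemma i' Q1 hQ1inv true
  have h2 := half_lemma i' Q2 hQ2inv false
  have hC1 : ((Finset.univ.filter Q1).card : ℝ) ≤ 2 ^ n * Real.exp (-(γ ^ 2) / (2 * s)) :=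
    chernoff (fun j => -(a j)) γ s hγ hs han
  have hC2 : ((Finset.univ.filter Q2).card : ℝ) ≤ 2 ^ n * Real.exp (-(γ ^ 2) / (2 * s)) :=
    chernoff a γ s hγ hs ha
  have hnat : 2 * (Finset.univ.filter (fun ε : Fin n → Bool =>
        Real.sign ((B.mulVec (Xpm ε)) i) ≠ Real.sign (Xpm ε (Fin.castLE hbn i)))).card
      ≤ (Finset.univ.filter Q1).card + (Finset.univ.filter Q2).card := by
    have := Nat.mul_le_mul_left 2 hMcard
    rw [Nat.mul_add] at this
    exact le_trans this (Nat.add_le_add h1 h2)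
  have hre : ((Finset.univ.filter (fun ε : Fin n → Bool =>
        Real.sign ((B.mulVec (Xpm ε)) i) ≠ Real.sign (Xpm ε (Fin.castLE hbn i)))).card : ℝ)
      ≤ 2 ^ n * Real.exp (-(γ ^ 2) / (2 * s)) := by
    have := (Nat.cast_le (α := ℝ)).2 hnat
    push_cast at this
    linarith
  refine le_trans hre ?_
  apply mul_le_mul_of_nonneg_left _ (by positivity)
  apply Real.exp_le_exp.2
  rw [div_le_div_iff₀ (by positivity) (by positivity)]
  rw [hγdef, hsdef]
  nlinarith [sq_nonneg lam, sq_nonneg (1 - lam)]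

/-- If each row of B is dominated by a diagonal entry of size at least `1 − λ`
(with rows of ℓ₂-norm at most 1 and `0 < λ < 0.1`), then with probability at least
`1 − n e^{−1/(5λ)}` every coordinate `(BX)_i` has the same sign as `X_i`; in
particular `‖BX‖₁ = ∑_{i≤b} X_i (BX)_i` except with probability `n e^{−1/(5λ)}`. -/
theorem sign_agreement_big_rows {b n : ℕ} (hbn : b ≤ n) (B : Matrix (Fin b) (Fin n) ℝ)
    (lam : ℝ) (hlam0 : 0 < lam) (hlam1 : lam < 0.1)
    (hrow : ∀ i, Real.sqrt (∑ j, (B i j) ^ 2) ≤ 1)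
    (hdiag : ∀ i, 1 - lam ≤ B i (Fin.castLE hbn i)) :
    (((Finset.univ.filter (fun ε : Fin n → Bool => ∃ i : Fin b,
          Real.sign ((B.mulVec (Xpm ε)) i) ≠ Real.sign (Xpm ε (Fin.castLE hbn i)))).card : ℝ)
        / 2 ^ n ≤ n * Real.exp (-1 / (5 * lam))) ∧
    (((Finset.univ.filter (fun ε : Fin n → Bool =>
          (∑ i : Fin b, |(B.mulVec (Xpm ε)) i|) ≠
            ∑ i : Fin b, Xpm ε (Fin.castLE hbn i) * (B.mulVec (Xpm ε)) i)).card : ℝ)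
        / 2 ^ n ≤ n * Real.exp (-1 / (5 * lam))) := by
  classical
  set E := Real.exp (-1 / (5 * lam)) with hE
  have hEpos : 0 < E := Real.exp_pos _
  -- union bound for the first event
  have hsub : (Finset.univ.filter (fun ε : Fin n → Bool => ∃ i : Fin b,
        Real.sign ((B.mulVec (Xpm ε)) i) ≠ Real.sign (Xpm ε (Fin.castLE hbn i))))
      ⊆ Finset.univ.biUnion (fun i : Fin b => Finset.univ.filter (fun ε : Fin n → Bool =>
        Real.sign ((B.mulVec (Xpm ε)) i) ≠ Real.sign (Xpm ε (Fin.castLE hbn i)))) := by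
    intro ε hε
    obtain ⟨i, hi⟩ := (Finset.mem_filter.1 hε).2
    exact Finset.mem_biUnion.2 ⟨i, Finset.mem_univ _,
      Finset.mem_filter.2 ⟨Finset.mem_univ _, hi⟩⟩
  have hcard1 : ((Finset.univ.filter (fun ε : Fin n → Bool => ∃ i : Fin b,
        Real.sign ((B.mulVec (Xpm ε)) i) ≠ Real.sign (Xpm ε (Fin.castLE hbn i)))).card : ℝ)
      ≤ (n : ℝ) * E * 2 ^ n := by
    have hnat : (Finset.univ.filter (fun ε : Fin n → Bool => ∃ i : Fin b,
          Real.sign ((B.mulVec (Xpm ε)) i) ≠ Real.sign (Xpm ε (Fin.castLE hbn i)))).card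
        ≤ ∑ i : Fin b, (Finset.univ.filter (fun ε : Fin n → Bool =>
          Real.sign ((B.mulVec (Xpm ε)) i) ≠ Real.sign (Xpm ε (Fin.castLE hbn i)))).card :=
      le_trans (Finset.card_le_card hsub) (Finset.card_biUnion_le)
    calc ((Finset.univ.filter (fun ε : Fin n → Bool => ∃ i : Fin b,
          Real.sign ((B.mulVec (Xpm ε)) i) ≠ Real.sign (Xpm ε (Fin.castLE hbn i)))).card : ℝ)
        ≤ ∑ i : Fin b, ((Finset.univ.filter (fun ε : Fin n → Bool =>
            Real.sign ((B.mulVec (Xpm ε)) i) ≠ Real.sign (Xpm ε (Fin.castLE hbn i)))).card : ℝ) := by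
          exact_mod_cast hnat
      _ ≤ ∑ _i : Fin b, (2:ℝ) ^ n * E := by
          apply Finset.sum_le_sum
          intro i _
          exact row_bound hbn B lam hlam0 hlam1 hrow hdiag i
      _ = (b : ℝ) * (2 ^ n * E) := by
          rw [Finset.sum_const]
          simp [mul_comm]
      _ ≤ (n : ℝ) * E * 2 ^ n := by
          have hb : (b : ℝ) ≤ (n : ℝ) := by exact_mod_cast hbn
          have : (0:ℝ) ≤ 2 ^ n * E := by positivity
          nlinarith
  have h2n : (0:ℝ) < 2 ^ n := by positivity
  have first : ((Finset.univ.filter (fun ε : Fin n → Bool => ∃ i : Fin b,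
        Real.sign ((B.mulVec (Xpm ε)) i) ≠ Real.sign (Xpm ε (Fin.castLE hbn i)))).card : ℝ)
      / 2 ^ n ≤ n * E := by
    rw [div_le_iff₀ h2n]
    exact hcard1
  refine ⟨first, ?_⟩
  -- the second event is contained in the first
  have hsub2 : (Finset.univ.filter (fun ε : Fin n → Bool =>
        (∑ i : Fin b, |(B.mulVec (Xpm ε)) i|) ≠
          ∑ i : Fin b, Xpm ε (Fin.castLE hbn i) * (B.mulVec (Xpm ε)) i))
      ⊆ (Finset.univ.filter (fun ε : Fin n → Bool => ∃ i : Fin b,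
        Real.sign ((B.mulVec (Xpm ε)) i) ≠ Real.sign (Xpm ε (Fin.castLE hbn i)))) := by
    intro ε hε
    refine Finset.mem_filter.2 ⟨Finset.mem_univ _, ?_⟩
    by_contra hno
    push_neg at hno
    have hne := (Finset.mem_filter.1 hε).2
    apply hne
    refine Finset.sum_congr rfl fun i _ => ?_
    have hi := hno i
    cases hc : ε (Fin.castLE hbn i) with
    | true =>
      have hx : Xpm ε (Fin.castLE hbn i) = 1 := by simp [Xpm, hc]
      rw [hx] at hi ⊢
      rw [Real.sign_one] at hi
      have hpos : 0 < (B.mulVec (Xpm ε)) i := by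
        rcases lt_trichotomy ((B.mulVec (Xpm ε)) i) 0 with h | h | h
        · rw [Real.sign_of_neg h] at hi; norm_num at hi
        · rw [h, Real.sign_zero] at hi; norm_num at hi
        · exact h
      rw [abs_of_pos hpos, one_mul]
    | false =>
      have hx : Xpm ε (Fin.castLE hbn i) = -1 := by simp [Xpm, hc]
      rw [hx] at hi ⊢
      have hsn : Real.sign (-1 : ℝ) = -1 := by
        rw [show (-1:ℝ) = -(1:ℝ) by ring, Real.sign_neg, Real.sign_one]
      rw [hsn] at hi
      have hneg : (B.mulVec (Xpm ε)) i < 0 := by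
        rcases lt_trichotomy ((B.mulVec (Xpm ε)) i) 0 with h | h | h
        · exact h
        · rw [h, Real.sign_zero] at hi; norm_num at hi
        · rw [Real.sign_of_pos h] at hi; norm_num at hi
      rw [abs_of_neg hneg]
      ring
  refine le_trans ?_ first
  apply div_le_div_of_nonneg_right _ h2n.le
  exact_mod_cast Finset.card_le_card hsub2
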